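/- For every finite hypergraph H, the unique-maximum choice number satisfies χ^um_ch(H) ≤ s(H), where s(H) is the least positive integer s with |E(H)| ≤ s(s−1)/2. -/
import Mathlib


/-- `sOf m` is the least positive integer `s` with `m ≤ s(s-1)/2`. -/
noncomputable def sOf (m : ℕ) : ℕ := sInf {s : ℕ | 0 < s ∧ m ≤ s * (s - 1) / 2}

private lemma choose_two_succ (t : ℕ) : (t + 1).choose 2 = t.choose 2 + t := by
  rw [Nat.choose_succ_succ]
  simp [Nat.choose_one_right, Nat.add_comm]

private lemma um_main {V : Type} [DecidableEq V] :
    ∀ (m : ℕ) (E : Finset (Finset V)) (L : V → Finset ℕ),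
      E.card ≤ m →
      (∀ S ∈ E, S.Nonempty) →
      (∀ v, (L v).Nonempty) →
      (∀ v, (∃ S ∈ E, v ∈ S) →
        E.card ≤ ((L v).card).choose 2 ∨
          (E.filter (fun S => v ∈ S)).card + 1 ≤ (L v).card) →
      ∃ C : V → ℕ, (∀ v, C v ∈ L v) ∧
        ∀ S ∈ E, ∃ v ∈ S, ∀ u ∈ S, u ≠ v → C u < C v := by
  intro m
  induction m with
  | zero =>
    intro E L hcard _ hLne _
    have hE : E = ∅ := Finset.card_eq_zero.mp (Nat.le_zero.mp hcard)
    subst hE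
    exact ⟨fun v => (L v).min' (hLne v), fun v => (L v).min'_mem (hLne v),
      fun S hS => absurd hS (Finset.notMem_empty S)⟩
  | succ m ih =>
    intro E L hcard hEne hLne hJ
    by_cases hE0 : E = ∅
    · subst hE0
      exact ⟨fun v => (L v).min' (hLne v), fun v => (L v).min'_mem (hLne v),
        fun S hS => absurd hS (Finset.notMem_empty S)⟩
    · obtain ⟨S₀, hS₀⟩ := Finset.nonempty_iff_ne_empty.mpr hE0
      obtain ⟨x₀, hx₀⟩ := hEne S₀ hS₀
      have hB : ((E.biUnion id).biUnion L).Nonempty := by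
        obtain ⟨x, hx⟩ := hLne x₀
        exact ⟨x, Finset.mem_biUnion.mpr
          ⟨x₀, Finset.mem_biUnion.mpr ⟨S₀, hS₀, hx₀⟩, hx⟩⟩
      set W := E.biUnion id with hWdef
      set c := (W.biUnion L).max' hB with hcdef
      have hcmem : c ∈ W.biUnion L := Finset.max'_mem _ _
      have hle_c : ∀ u ∈ W, ∀ x ∈ L u, x ≤ c := fun u hu x hx =>
        Finset.le_max' _ x (Finset.mem_biUnion.mpr ⟨u, hu, hx⟩)
      obtain ⟨v₀, hv₀W, hv₀c⟩ := Finset.mem_biUnion.mp hcmem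
      set A := W.filter (fun v => c ∈ L v) with hAdef
      have hAne : A.Nonempty := ⟨v₀, Finset.mem_filter.mpr ⟨hv₀W, hv₀c⟩⟩
      obtain ⟨w, hwA, hwmax⟩ :=
        A.exists_max_image (fun v => (E.filter (fun S => v ∈ S)).card) hAne
      have hwW : w ∈ W := (Finset.mem_filter.mp hwA).1
      have hwc : c ∈ L w := (Finset.mem_filter.mp hwA).2
      obtain ⟨Sw, hSwE, hwSw⟩ := Finset.mem_biUnion.mp hwW
      set hit := E.filter (fun S => w ∈ S) with hhitdef
      have hSwhit : Sw ∈ hit := Finset.mem_filter.mpr ⟨hSwE, hwSw⟩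
      have hD1 : 1 ≤ hit.card := Finset.card_pos.mpr ⟨Sw, hSwhit⟩
      set E' := E.filter (fun S => w ∉ S) with hE'def
      have hE'subE : E' ⊆ E := Finset.filter_subset _ _
      have hsplit : hit.card + E'.card = E.card := by
        rw [hhitdef, hE'def]
        exact Finset.card_filter_add_card_filter_not _
      have hE'card : E'.card ≤ m := by omega
      set hitV := hit.biUnion id with hitVdef
      have hhitW : ∀ u ∈ hitV, u ∈ W ∧ ∃ S ∈ E, u ∈ S ∧ w ∈ S := by
        intro u hu
        obtain ⟨S, hS, huS⟩ := Finset.mem_biUnion.mp hu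
        have hSE : S ∈ E := (Finset.mem_filter.mp hS).1
        have hwS : w ∈ S := (Finset.mem_filter.mp hS).2
        exact ⟨Finset.mem_biUnion.mpr ⟨S, hSE, huS⟩, S, hSE, huS, hwS⟩
      have hbig : ∀ u ∈ hitV, 2 ≤ (L u).card := by
        intro u hu
        obtain ⟨huW, S, hSE, huS, hwS⟩ := hhitW u hu
        rcases hJ u ⟨S, hSE, huS⟩ with h | h
        · by_contra hlt
          push_neg at hlt
          have hz : ((L u).card).choose 2 = 0 := Nat.choose_eq_zero_of_lt (by omega)
          have hEpos : 0 < E.card := Finset.card_pos.mpr ⟨S, hSE⟩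
          omega
        · have : 0 < (E.filter (fun S => u ∈ S)).card :=
            Finset.card_pos.mpr ⟨S, Finset.mem_filter.mpr ⟨hSE, huS⟩⟩
          omega
      classical
      set L' : V → Finset ℕ :=
        fun u => if u = w then {c} else if u ∈ hitV then (L u).erase c else L u
        with hL'def
      have hL'w : L' w = {c} := by simp [hL'def]
      have hL'hit : ∀ u, u ≠ w → u ∈ hitV → L' u = (L u).erase c := by
        intro u h1 h2; simp [hL'def, h1, h2]
      have hL'other : ∀ u, u ≠ w → u ∉ hitV → L' u = L u := by
        intro u h1 h2; simp [hL'def, h1, h2]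
      have hL'ne : ∀ v, (L' v).Nonempty := by
        intro v
        by_cases h1 : v = w
        · subst h1; rw [hL'w]; exact ⟨c, Finset.mem_singleton_self c⟩
        · by_cases h2 : v ∈ hitV
          · rw [hL'hit v h1 h2]
            by_cases h3 : c ∈ L v
            · rw [← Finset.card_pos, Finset.card_erase_of_mem h3]
              have := hbig v h2; omega
            · rw [Finset.erase_eq_of_notMem h3]; exact hLne v
          · rw [hL'other v h1 h2]; exact hLne v
      have hE'ne : ∀ S ∈ E', S.Nonempty := fun S hS => hEne S (hE'subE hS)
      have hnotw : ∀ v, (∃ S ∈ E', v ∈ S) → v ≠ w := by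
        rintro v ⟨S, hS, hvS⟩ rfl
        exact (Finset.mem_filter.mp hS).2 hvS
      have hJ' : ∀ v, (∃ S ∈ E', v ∈ S) →
          E'.card ≤ ((L' v).card).choose 2 ∨
            (E'.filter (fun S => v ∈ S)).card + 1 ≤ (L' v).card := by
        intro v hv
        obtain ⟨S, hSE', hvS⟩ := hv
        have hvw : v ≠ w := hnotw v ⟨S, hSE', hvS⟩
        have hSE : S ∈ E := hE'subE hSE'
        have hdegle : (E'.filter (fun T => v ∈ T)).card ≤ (E.filter (fun T => v ∈ T)).card :=
          Finset.card_le_card (fun T hT => by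
            rw [Finset.mem_filter] at hT ⊢
            exact ⟨hE'subE hT.1, hT.2⟩)
        by_cases hvhit : v ∈ hitV
        · obtain ⟨hvW, T, hTE, hvT, hwT⟩ := hhitW v hvhit
          have hdrop : (E'.filter (fun T => v ∈ T)).card + 1
              ≤ (E.filter (fun T => v ∈ T)).card := by
            have hss : E'.filter (fun T => v ∈ T) ⊂ E.filter (fun T => v ∈ T) := by
              refine (Finset.ssubset_iff_of_subset (fun T hT => by
                rw [Finset.mem_filter] at hT ⊢
                exact ⟨hE'subE hT.1, hT.2⟩)).mpr ?_
              refine ⟨T, Finset.mem_filter.mpr ⟨hTE, hvT⟩, ?_⟩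
              intro hmem
              exact (Finset.mem_filter.mp ((Finset.mem_filter.mp hmem).1)).2 hwT
            have := Finset.card_lt_card hss
            omega
          rw [hL'hit v hvw hvhit]
          by_cases hcv : c ∈ L v
          · have hvA : v ∈ A := Finset.mem_filter.mpr ⟨hvW, hcv⟩
            have hcardE : ((L v).erase c).card = (L v).card - 1 :=
              Finset.card_erase_of_mem hcv
            have h2 := hbig v hvhit
            by_cases hdeg : (E.filter (fun T => v ∈ T)).card + 1 ≤ (L v).card
            · right; omega
            · rcases hJ v ⟨S, hSE, hvS⟩ with hm | hd
              · left
                push_neg at hdeg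
                have hwd : (E.filter (fun T => v ∈ T)).card ≤ hit.card := hwmax v hvA
                have hch : ((L v).card).choose 2
                    = ((L v).card - 1).choose 2 + ((L v).card - 1) := by
                  obtain ⟨t, ht⟩ : ∃ t, (L v).card = t + 1 := ⟨(L v).card - 1, by omega⟩
                  rw [ht]
                  simp [choose_two_succ]
                rw [Finset.card_erase_of_mem hcv]
                omega
              · right; omega
          · rw [Finset.erase_eq_of_notMem hcv]
            rcases hJ v ⟨S, hSE, hvS⟩ with hm | hd
            · left; omega
            · right; omega
        · rw [hL'other v hvw hvhit]
          have hdegeq : E'.filter (fun T => v ∈ T) = E.filter (fun T => v ∈ T) := by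
            apply Finset.Subset.antisymm
            · intro T hT; rw [Finset.mem_filter] at hT ⊢; exact ⟨hE'subE hT.1, hT.2⟩
            · intro T hT
              rw [Finset.mem_filter] at hT ⊢
              refine ⟨Finset.mem_filter.mpr ⟨hT.1, ?_⟩, hT.2⟩
              intro hwT
              exact hvhit (Finset.mem_biUnion.mpr
                ⟨T, Finset.mem_filter.mpr ⟨hT.1, hwT⟩, hT.2⟩)
          rcases hJ v ⟨S, hSE, hvS⟩ with hm | hd
          · left; omega
          · right; rw [hdegeq]; omega
      obtain ⟨C, hC1, hC2⟩ := ih E' L' hE'card hE'ne hL'ne hJ'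
      have hCw : C w = c := by
        have := hC1 w; rw [hL'w] at this; exact Finset.mem_singleton.mp this
      refine ⟨C, ?_, ?_⟩
      · intro v
        by_cases h1 : v = w
        · subst h1; rw [hCw]; exact hwc
        · by_cases h2 : v ∈ hitV
          · have := hC1 v; rw [hL'hit v h1 h2] at this
            exact Finset.mem_of_mem_erase this
          · have := hC1 v; rwa [hL'other v h1 h2] at this
      · intro S hS
        by_cases hwS : w ∈ S
        · refine ⟨w, hwS, ?_⟩
          intro u huS huw
          have huhit : u ∈ hitV := Finset.mem_biUnion.mpr
            ⟨S, Finset.mem_filter.mpr ⟨hS, hwS⟩, huS⟩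
          have hCu := hC1 u
          rw [hL'hit u huw huhit] at hCu
          have hne : C u ≠ c := Finset.ne_of_mem_erase hCu
          have hmem : C u ∈ L u := Finset.mem_of_mem_erase hCu
          have huW : u ∈ W := Finset.mem_biUnion.mpr ⟨S, hS, huS⟩
          have := hle_c u huW (C u) hmem
          rw [hCw]
          omega
        · exact hC2 S (Finset.mem_filter.mpr ⟨hS, hwS⟩)

/-- The unique-maximum choice number of a finite hypergraph is at most `s(H)`:
for every family of lists (of positive integers) each of size at least `s(H)`,
`H` admits a unique-maximum coloring from the lists. -/
theorem um_choice_le_s {V : Type} [Fintype V] [DecidableEq V]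
    (E : Finset (Finset V)) (L : V → Finset ℕ)
    (hpos : ∀ v : V, ∀ c ∈ L v, 0 < c)
    (hsize : ∀ v : V, sOf E.card ≤ (L v).card) :
    ∃ C : V → ℕ, (∀ v, C v ∈ L v) ∧
      ∀ S ∈ E, S.Nonempty → ∃ v ∈ S, ∀ u ∈ S, u ≠ v → C u < C v := by
  classical
  have hset : sOf E.card ∈ {s : ℕ | 0 < s ∧ E.card ≤ s * (s - 1) / 2} := by
    apply Nat.sInf_mem
    refine ⟨2 * E.card + 1, by omega, ?_⟩
    have h1 : 2 * E.card + 1 - 1 = 2 * E.card := by omega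
    rw [h1, show (2 * E.card + 1) * (2 * E.card) = (E.card * (2 * E.card + 1)) * 2 by ring,
      Nat.mul_div_cancel _ (by norm_num)]
    nlinarith
  obtain ⟨hspos, hsle⟩ := hset
  have hchoose : E.card ≤ (sOf E.card).choose 2 := by
    rw [Nat.choose_two_right]; exact hsle
  have hLne : ∀ v, (L v).Nonempty := fun v =>
    Finset.card_pos.mp (lt_of_lt_of_le hspos (hsize v))
  set E₁ := E.filter (fun S => S.Nonempty) with hE₁def
  have hE₁sub : E₁ ⊆ E := Finset.filter_subset _ _
  have hE₁card : E₁.card ≤ E.card := Finset.card_le_card hE₁sub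
  have hJ : ∀ v, (∃ S ∈ E₁, v ∈ S) →
      E₁.card ≤ ((L v).card).choose 2 ∨
        (E₁.filter (fun S => v ∈ S)).card + 1 ≤ (L v).card := by
    intro v _
    left
    calc E₁.card ≤ E.card := hE₁card
      _ ≤ (sOf E.card).choose 2 := hchoose
      _ ≤ ((L v).card).choose 2 := Nat.choose_le_choose 2 (hsize v)
  obtain ⟨C, h1, h2⟩ := um_main E₁.card E₁ L le_rfl
    (fun S hS => (Finset.mem_filter.mp hS).2) hLne hJ
  exact ⟨C, h1, fun S hS hSne => h2 S (Finset.mem_filter.mpr ⟨hS, hSne⟩)⟩
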